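/- arXiv:2212.10041 — 9 statements merged into one kernel-verified Lean document; each statement's English description precedes it below -/
import Mathlib

section
/- Let M₁ and M₂ be Γ-semigroups and T : M₁ → P*(M₂) a set-valued anti-homomorphism. For any subsets A₁, A₂ ⊆ M₂, the product of upper approximations is contained in the upper approximation of the product: T̄(A₂) Γ T̄(A₁) ⊆ T̄(A₁ Γ A₂). -/
/-- Product of two subsets of a Γ-semigroup: XΓY = {xγy}. -/
def gprod {M G : Type} (mul : M → G → M → M) (X Y : Set M) : Set M :=
  {z | ∃ x ∈ X, ∃ y ∈ Y, ∃ γ : G, z = mul x γ y}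

/-- Product UαV of two subsets with a fixed γ. -/
def aprod {M G : Type} (mul : M → G → M → M) (U : Set M) (γ : G) (V : Set M) : Set M :=
  {z | ∃ u ∈ U, ∃ v ∈ V, z = mul u γ v}

/-- Upper approximation. -/
def upperApprox {A B : Type} (T : A → Set B) (S : Set B) : Set A :=
  {x | (T x ∩ S).Nonempty}

/-- Lower approximation. -/
def lowerApprox {A B : Type} (T : A → Set B) (S : Set B) : Set A :=
  {x | T x ⊆ S}

theorem stmt4 {M1 M2 G : Type} (mul1 : M1 → G → M1 → M1) (mul2 : M2 → G → M2 → M2)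
    (hG1 : ∀ (a b c : M1) (α β : G), mul1 (mul1 a α b) β c = mul1 a α (mul1 b β c))
    (hG2 : ∀ (a b c : M2) (α β : G), mul2 (mul2 a α b) β c = mul2 a α (mul2 b β c))
    (T : M1 → Set M2) (hT : ∀ x, (T x).Nonempty)
    (hanti : ∀ (a b : M1) (α : G), aprod mul2 (T b) α (T a) ⊆ T (mul1 a α b)) (A1 A2 : Set M2) :
    gprod mul1 (upperApprox T A2) (upperApprox T A1) ⊆ upperApprox T (gprod mul2 A1 A2) := by
  rintro z ⟨x, ⟨a, ha, ha2⟩, y, ⟨b, hb, hb1⟩, γ, rfl⟩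
  refine ⟨mul2 b γ a, hanti x y γ ⟨b, hb, a, ha, rfl⟩, b, hb1, a, ha2, γ, rfl⟩
end

section
/- Let M₁ and M₂ be Γ-semigroups and T : M₁ → P*(M₂) a strong set-valued anti-homomorphism. For any subsets A₁, A₂ ⊆ M₂, the product of lower approximations is contained in the lower approximation of the product: T_(A₂) Γ T_(A₁) ⊆ T_(A₁ Γ A₂). -/
theorem stmt5 {M1 M2 G : Type} (mul1 : M1 → G → M1 → M1) (mul2 : M2 → G → M2 → M2)
    (hG1 : ∀ (a b c : M1) (α β : G), mul1 (mul1 a α b) β c = mul1 a α (mul1 b β c))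
    (hG2 : ∀ (a b c : M2) (α β : G), mul2 (mul2 a α b) β c = mul2 a α (mul2 b β c))
    (T : M1 → Set M2) (hT : ∀ x, (T x).Nonempty)
    (hstrong : ∀ (a b : M1) (α : G), T (mul1 a α b) = aprod mul2 (T b) α (T a)) (A1 A2 : Set M2) :
    gprod mul1 (lowerApprox T A2) (lowerApprox T A1) ⊆ lowerApprox T (gprod mul2 A1 A2) := by
  rintro z ⟨x, hx, y, hy, γ, rfl⟩ w hw
  rw [hstrong] at hw
  obtain ⟨u, hu, v, hv, rfl⟩ := hw
  exact ⟨u, hy hu, v, hx hv, γ, rfl⟩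
end

section
/- Let M₁, M₂ be Γ-semigroups and T : M₁ → P*(M₂) a set-valued anti-homomorphism. If S is a sub-Γ-semigroup of M₂ and T̄(S) is nonempty, then T̄(S) is a sub-Γ-semigroup of M₁. -/
theorem stmt6 {M1 M2 G : Type} (mul1 : M1 → G → M1 → M1) (mul2 : M2 → G → M2 → M2)
    (hG1 : ∀ (a b c : M1) (α β : G), mul1 (mul1 a α b) β c = mul1 a α (mul1 b β c))
    (hG2 : ∀ (a b c : M2) (α β : G), mul2 (mul2 a α b) β c = mul2 a α (mul2 b β c))
    (T : M1 → Set M2) (hT : ∀ x, (T x).Nonempty)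
    (hanti : ∀ (a b : M1) (α : G), aprod mul2 (T b) α (T a) ⊆ T (mul1 a α b)) (S : Set M2) (hS0 : S.Nonempty) (hS : gprod mul2 S S ⊆ S)
    (hne : (upperApprox T S).Nonempty) :
    (upperApprox T S).Nonempty ∧
      gprod mul1 (upperApprox T S) (upperApprox T S) ⊆ upperApprox T S := by
  refine ⟨hne, ?_⟩
  rintro z ⟨x, ⟨tx, htx, hxs⟩, y, ⟨ty, hty, hys⟩, γ, rfl⟩
  refine ⟨mul2 ty γ tx, hanti x y γ ⟨ty, hty, tx, htx, rfl⟩, hS ⟨ty, hys, tx, hxs, γ, rfl⟩⟩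
end

section
/- Let M₁, M₂ be Γ-semigroups and T : M₁ → P*(M₂) a set-valued anti-homomorphism with T(x) ≠ ∅ for all x. If B is a bi-ideal of M₂ (BΓB ⊆ B and BΓM₂ΓB ⊆ B) and T̄(B) is nonempty, then T̄(B) is a bi-ideal of M₁: T̄(B)ΓT̄(B) ⊆ T̄(B) and T̄(B)ΓM₁ΓT̄(B) ⊆ T̄(B). -/
theorem stmt10 {M1 M2 G : Type} (mul1 : M1 → G → M1 → M1) (mul2 : M2 → G → M2 → M2)
    (hG1 : ∀ (a b c : M1) (α β : G), mul1 (mul1 a α b) β c = mul1 a α (mul1 b β c))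
    (hG2 : ∀ (a b c : M2) (α β : G), mul2 (mul2 a α b) β c = mul2 a α (mul2 b β c))
    (T : M1 → Set M2) (hT : ∀ x, (T x).Nonempty)
    (hanti : ∀ (a b : M1) (α : G), aprod mul2 (T b) α (T a) ⊆ T (mul1 a α b)) (B : Set M2) (hB0 : B.Nonempty)
    (hB1 : gprod mul2 B B ⊆ B) (hB2 : gprod mul2 (gprod mul2 B Set.univ) B ⊆ B)
    (hne : (upperApprox T B).Nonempty) :
    gprod mul1 (upperApprox T B) (upperApprox T B) ⊆ upperApprox T B ∧
      gprod mul1 (gprod mul1 (upperApprox T B) Set.univ) (upperApprox T B) ⊆ upperApprox T B := by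
  constructor
  · rintro z ⟨x, ⟨bx, hbxT, hbxB⟩, y, ⟨by', hbyT, hbyB⟩, γ, rfl⟩
    exact ⟨mul2 by' γ bx, hanti x y γ ⟨by', hbyT, bx, hbxT, rfl⟩,
      hB1 ⟨by', hbyB, bx, hbxB, γ, rfl⟩⟩
  · rintro z ⟨w, ⟨x, ⟨bx, hbxT, hbxB⟩, m, _, α, rfl⟩, y, ⟨by', hbyT, hbyB⟩, β, rfl⟩
    obtain ⟨tm, htm⟩ := hT m
    refine ⟨mul2 (mul2 by' β tm) α bx, ?_, hB2 ⟨mul2 by' β tm, ⟨by', hbyB, tm, Set.mem_univ tm, β, rfl⟩, bx, hbxB, α, rfl⟩⟩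
    rw [hG1]
    exact hanti x (mul1 m β y) α ⟨mul2 by' β tm, hanti m y β ⟨by', hbyT, tm, htm, rfl⟩, bx, hbxT, rfl⟩
end

section
/- Let M₁, M₂ be Γ-semigroups and T : M₁ → P*(M₂) a strong set-valued anti-homomorphism. If B is a bi-ideal of M₂ and T_(B) is nonempty, then T_(B) is a bi-ideal of M₁: T_(B)ΓT_(B) ⊆ T_(B) and T_(B)ΓM₁ΓT_(B) ⊆ T_(B). -/
theorem stmt11 {M1 M2 G : Type} (mul1 : M1 → G → M1 → M1) (mul2 : M2 → G → M2 → M2)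
    (hG1 : ∀ (a b c : M1) (α β : G), mul1 (mul1 a α b) β c = mul1 a α (mul1 b β c))
    (hG2 : ∀ (a b c : M2) (α β : G), mul2 (mul2 a α b) β c = mul2 a α (mul2 b β c))
    (T : M1 → Set M2) (hT : ∀ x, (T x).Nonempty)
    (hstrong : ∀ (a b : M1) (α : G), T (mul1 a α b) = aprod mul2 (T b) α (T a)) (B : Set M2) (hB0 : B.Nonempty)
    (hB1 : gprod mul2 B B ⊆ B) (hB2 : gprod mul2 (gprod mul2 B Set.univ) B ⊆ B)
    (hne : (lowerApprox T B).Nonempty) :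
    gprod mul1 (lowerApprox T B) (lowerApprox T B) ⊆ lowerApprox T B ∧
      gprod mul1 (gprod mul1 (lowerApprox T B) Set.univ) (lowerApprox T B) ⊆ lowerApprox T B := by
  constructor
  · rintro z ⟨x, hx, y, hy, γ, rfl⟩
    intro t ht
    rw [hstrong] at ht
    obtain ⟨u, hu, v, hv, rfl⟩ := ht
    exact hB1 ⟨u, hy hu, v, hx hv, γ, rfl⟩
  · rintro z ⟨w, ⟨x, hx, u, -, α, rfl⟩, y, hy, β, rfl⟩
    intro t ht
    rw [hstrong, hstrong] at ht
    obtain ⟨ty, hty, s, hs, rfl⟩ := ht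
    obtain ⟨tu, htu, tx, htx, rfl⟩ := hs
    rw [← hG2]
    exact hB2 ⟨mul2 ty β tu, ⟨ty, hy hty, tu, trivial, β, rfl⟩, tx, hx htx, α, rfl⟩
end

section
/- Let M₁, M₂ be Γ-semigroups and T : M₁ → P*(M₂) a set-valued anti-homomorphism. If J is an interior ideal of M₂ (JΓJ ⊆ J and M₂ΓJΓM₂ ⊆ J) and T̄(J) is nonempty, then T̄(J) is an interior ideal of M₁: M₁ΓT̄(J)ΓM₁ ⊆ T̄(J). -/
theorem stmt12 {M1 M2 G : Type} (mul1 : M1 → G → M1 → M1) (mul2 : M2 → G → M2 → M2)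
    (hG1 : ∀ (a b c : M1) (α β : G), mul1 (mul1 a α b) β c = mul1 a α (mul1 b β c))
    (hG2 : ∀ (a b c : M2) (α β : G), mul2 (mul2 a α b) β c = mul2 a α (mul2 b β c))
    (T : M1 → Set M2) (hT : ∀ x, (T x).Nonempty)
    (hanti : ∀ (a b : M1) (α : G), aprod mul2 (T b) α (T a) ⊆ T (mul1 a α b)) (J : Set M2) (hJ0 : J.Nonempty)
    (hJ1 : gprod mul2 J J ⊆ J) (hJ2 : gprod mul2 (gprod mul2 Set.univ J) Set.univ ⊆ J)
    (hne : (upperApprox T J).Nonempty) :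
    gprod mul1 (gprod mul1 Set.univ (upperApprox T J)) Set.univ ⊆ upperApprox T J := by
  rintro z ⟨p, ⟨m1, -, x, hx, α, rfl⟩, m2, -, β, rfl⟩
  obtain ⟨j, hjT, hjJ⟩ := hx
  obtain ⟨t1, ht1⟩ := hT m1
  obtain ⟨t2, ht2⟩ := hT m2
  refine ⟨mul2 t2 β (mul2 j α t1), ?_, ?_⟩
  · exact hanti _ _ _ ⟨t2, ht2, _, hanti _ _ _ ⟨j, hjT, t1, ht1, rfl⟩, rfl⟩
  · rw [← hG2]
    exact hJ2 ⟨_, ⟨t2, trivial, j, hjJ, β, rfl⟩, t1, trivial, α, rfl⟩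
end

section
/- Let M₁, M₂ be Γ-semigroups and T : M₁ → P*(M₂) a strong set-valued anti-homomorphism. If J is an interior ideal of M₂ and T_(J) is nonempty, then T_(J) is an interior ideal of M₁: M₁ΓT_(J)ΓM₁ ⊆ T_(J). -/
theorem stmt13 {M1 M2 G : Type} (mul1 : M1 → G → M1 → M1) (mul2 : M2 → G → M2 → M2)
    (hG1 : ∀ (a b c : M1) (α β : G), mul1 (mul1 a α b) β c = mul1 a α (mul1 b β c))
    (hG2 : ∀ (a b c : M2) (α β : G), mul2 (mul2 a α b) β c = mul2 a α (mul2 b β c))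
    (T : M1 → Set M2) (hT : ∀ x, (T x).Nonempty)
    (hstrong : ∀ (a b : M1) (α : G), T (mul1 a α b) = aprod mul2 (T b) α (T a)) (J : Set M2) (hJ0 : J.Nonempty)
    (hJ1 : gprod mul2 J J ⊆ J) (hJ2 : gprod mul2 (gprod mul2 Set.univ J) Set.univ ⊆ J)
    (hne : (lowerApprox T J).Nonempty) :
    gprod mul1 (gprod mul1 Set.univ (lowerApprox T J)) Set.univ ⊆ lowerApprox T J := by
  rintro z ⟨x, ⟨a, -, j, hj, α, rfl⟩, c, -, β, rfl⟩
  intro w hw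
  rw [hstrong] at hw
  obtain ⟨u, hu, v, hv, rfl⟩ := hw
  rw [hstrong] at hv
  obtain ⟨t, ht, s, hs, rfl⟩ := hv
  rw [← hG2]
  exact hJ2 ⟨mul2 u β t, ⟨u, trivial, t, hj ht, β, rfl⟩, s, trivial, α, rfl⟩
end

section
/- Let M₁, M₂ be Γ-semigroups and T : M₁ → P*(M₂) a strong set-valued anti-homomorphism. If Q is a quasi-ideal of M₂ and T_(Q) is nonempty, then T_(Q)ΓM₁ ∩ M₁ΓT_(Q) ⊆ T_(Q), i.e., T_(Q) is a quasi-ideal of M₁. -/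
theorem stmt15 {M1 M2 G : Type} (mul1 : M1 → G → M1 → M1) (mul2 : M2 → G → M2 → M2)
    (hG1 : ∀ (a b c : M1) (α β : G), mul1 (mul1 a α b) β c = mul1 a α (mul1 b β c))
    (hG2 : ∀ (a b c : M2) (α β : G), mul2 (mul2 a α b) β c = mul2 a α (mul2 b β c))
    (T : M1 → Set M2) (hT : ∀ x, (T x).Nonempty)
    (hstrong : ∀ (a b : M1) (α : G), T (mul1 a α b) = aprod mul2 (T b) α (T a)) (Q : Set M2) (hQ0 : Q.Nonempty)
    (hQ : gprod mul2 Q Set.univ ∩ gprod mul2 Set.univ Q ⊆ Q)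
    (hne : (lowerApprox T Q).Nonempty) :
    gprod mul1 (lowerApprox T Q) Set.univ ∩ gprod mul1 Set.univ (lowerApprox T Q) ⊆
      lowerApprox T Q := by
  rintro z ⟨⟨q, hq, m, -, γ, hz1⟩, ⟨m', -, q', hq', γ', hz2⟩⟩
  intro t ht
  apply hQ
  constructor
  · have h := hstrong m' q' γ'
    rw [← hz2] at h
    rw [h] at ht
    obtain ⟨u, hu, v, hv, rfl⟩ := ht
    exact ⟨u, hq' hu, v, trivial, γ', rfl⟩
  · have h := hstrong q m γ
    rw [← hz1] at h
    rw [h] at ht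
    obtain ⟨u, hu, v, hv, rfl⟩ := ht
    exact ⟨u, trivial, v, hq hv, γ, rfl⟩
end

section
/- Let M₁, M₂ be Γ-semigroups and T : M₁ → P*(M₂) a strong set-valued anti-homomorphism with each T(x) nonempty. If B is a prime subset of M₂ (xαy ∈ B implies x ∈ B or y ∈ B), then T_(B) is a prime subset of M₁: for all a, b ∈ M₁ and α ∈ Γ, aαb ∈ T_(B) implies a ∈ T_(B) or b ∈ T_(B). -/
theorem stmt17 {M1 M2 G : Type} (mul1 : M1 → G → M1 → M1) (mul2 : M2 → G → M2 → M2)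
    (hG1 : ∀ (a b c : M1) (α β : G), mul1 (mul1 a α b) β c = mul1 a α (mul1 b β c))
    (hG2 : ∀ (a b c : M2) (α β : G), mul2 (mul2 a α b) β c = mul2 a α (mul2 b β c))
    (T : M1 → Set M2) (hT : ∀ x, (T x).Nonempty)
    (hstrong : ∀ (a b : M1) (α : G), T (mul1 a α b) = aprod mul2 (T b) α (T a))
    (B : Set M2) (hprime : ∀ (x y : M2) (α : G), mul2 x α y ∈ B → x ∈ B ∨ y ∈ B) :
    ∀ (a b : M1) (α : G), mul1 a α b ∈ lowerApprox T B →
      a ∈ lowerApprox T B ∨ b ∈ lowerApprox T B := by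
  intro a b α hab
  by_contra h
  push_neg at h
  obtain ⟨h1, h2⟩ := h
  simp only [lowerApprox, Set.mem_setOf_eq, Set.not_subset] at h1 h2
  obtain ⟨u, hu, hunb⟩ := h1
  obtain ⟨v, hv, hvnb⟩ := h2
  have : mul2 v α u ∈ B := hab (by rw [hstrong]; exact ⟨v, hv, u, hu, rfl⟩)
  rcases hprime v u α this with h | h
  · exact hvnb h
  · exact hunb h
end
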